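/- Let G be a just-infinite group generated by a set X ⊆ G, and suppose there exist x, y ∈ X with x*y ≠ y*x and a word w over X^{±1} such that the word x :: y :: w has product 1. Then G has finite palindromic width with respect to the generating set X ∪ {x*y}: there exists k ∈ ℕ such that every element of G is a product of at most k palindromes with respect to X ∪ {x*y}. -/

import Mathlib

/-- An element `g` of a group `G` is a palindrome with respect to `X ⊆ G` if `g` is the
product of some word over `X^{±1}` that equals its own reverse. -/
def IsPalindrome {G : Type*} [Group G] (X : Set G) (g : G) : Prop :=
  ∃ l : List G, (∀ t ∈ l, t ∈ X ∪ X⁻¹) ∧ l.reverse = l ∧ l.prod = g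

section Aux

variable {G : Type*} [Group G]

/-- Product of the letterwise inverse is the inverse of the product of the reverse. -/
lemma aux_map_inv_prod (u : List G) : (u.map fun t => t⁻¹).prod = u.reverse.prod⁻¹ := by
  rw [List.prod_inv_reverse u.reverse]
  simp

/-- The "reversal defect" subgroup: products of reverses of words (over `Y^{±1}`)
whose product is `1`. -/
def revDefect (Y : Set G) : Subgroup G where
  carrier := {g | ∃ u : List G, (∀ t ∈ u, t ∈ Y ∪ Y⁻¹) ∧ u.prod = 1 ∧ u.reverse.prod = g}
  one_mem' := ⟨[], by simp, by simp, by simp⟩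
  mul_mem' := by
    rintro a b ⟨u, hu, hu1, hua⟩ ⟨v, hv, hv1, hvb⟩
    refine ⟨v ++ u, ?_, by simp [hu1, hv1], by simp [hua, hvb]⟩
    intro t ht
    rcases List.mem_append.1 ht with h | h
    · exact hv t h
    · exact hu t h
  inv_mem' := by
    rintro a ⟨u, hu, hu1, hua⟩
    refine ⟨(u.map fun t => t⁻¹).reverse, ?_, ?_, ?_⟩
    · intro t ht
      simp only [List.mem_reverse, List.mem_map] at ht
      obtain ⟨s, hs, rfl⟩ := ht
      rcases hu s hs with h | h
      · exact Or.inr (by simpa using h)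
      · exact Or.inl (by simpa using h)
    · rw [← List.prod_inv_reverse, hu1, inv_one]
    · rw [List.reverse_reverse, aux_map_inv_prod, hua]

lemma revDefect_normal (Y : Set G) (hY : Subgroup.closure Y = ⊤) :
    (revDefect Y).Normal := by
  constructor
  intro a ha h
  obtain ⟨u, hu, hu1, hua⟩ := ha
  -- get a word for h over Y^{±1}
  have hh : h ∈ Submonoid.closure (Y ∪ Y⁻¹) := by
    rw [← Subgroup.closure_toSubmonoid, hY]
    trivial
  obtain ⟨v, hv, hvp⟩ := Submonoid.exists_list_of_mem_closure hh
  refine ⟨(v.map fun t => t⁻¹) ++ u ++ v.reverse, ?_, ?_, ?_⟩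
  · intro t ht
    simp only [List.append_assoc, List.mem_append, List.mem_map, List.mem_reverse] at ht
    rcases ht with ⟨s, hs, rfl⟩ | h | h
    · rcases hv s hs with h | h
      · exact Or.inr (by simpa using h)
      · exact Or.inl (by simpa using h)
    · exact hu t h
    · exact hv t h
  · rw [List.prod_append, List.prod_append, aux_map_inv_prod, hu1, mul_one,
      inv_mul_cancel]
  · simp only [List.reverse_append, List.reverse_reverse, List.prod_append, hua]
    rw [← List.prod_inv_reverse, hvp]
    group

/-- Every element of the reversal-defect subgroup is a single palindrome. -/
lemma revDefect_palindrome (Y : Set G) {g : G} (hg : g ∈ revDefect Y) :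
    IsPalindrome Y g := by
  obtain ⟨u, hu, hu1, hug⟩ := hg
  refine ⟨u ++ u.reverse, ?_, by simp, by simp [hu1, hug]⟩
  intro t ht
  rcases List.mem_append.1 ht with h | h
  · exact hu t h
  · exact hu t (List.mem_reverse.1 h)

end Aux

/-- Let `G` be a just-infinite group generated by `X`, with non-commuting
`x, y ∈ X` and a word `w` over `X^{±1}` such that `x :: y :: w` has product `1`. Then `G`
has finite palindromic width with respect to `X ∪ {x*y}`. -/
theorem just_infinite_finite_palindromic_width_after_adding_generator {G : Type*} [Group G]
    (hinf : Infinite G)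
    (hji : ∀ N : Subgroup G, N.Normal → N ≠ ⊥ → N.FiniteIndex)
    (X : Set G) (hX : Subgroup.closure X = ⊤)
    (x y : G) (hx : x ∈ X) (hy : y ∈ X) (hxy : x * y ≠ y * x)
    (w : List G) (hw : ∀ t ∈ w, t ∈ X ∪ X⁻¹)
    (hrel : (x :: y :: w).prod = 1) :
    ∃ k : ℕ, ∀ g : G, ∃ ps : List G, ps.length ≤ k ∧
      (∀ p ∈ ps, IsPalindrome (X ∪ {x * y}) p) ∧ ps.prod = g := by
  classical
  set Y : Set G := X ∪ {x * y} with hYdef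
  have hXY : X ⊆ Y := Set.subset_union_left
  have hY : Subgroup.closure Y = ⊤ :=
    top_unique (hX ▸ Subgroup.closure_mono hXY)
  set K : Subgroup G := revDefect Y with hKdef
  have hKnormal : K.Normal := revDefect_normal Y hY
  -- K is nontrivial: witnessed by the word [(x*y)⁻¹, x, y]
  have hKne : K ≠ ⊥ := by
    intro hbot
    have hmem : y * x * (x * y)⁻¹ ∈ K := by
      refine ⟨[(x * y)⁻¹, x, y], ?_, ?_, ?_⟩
      · intro t ht
        simp only [List.mem_cons, List.not_mem_nil, or_false] at ht
        rcases ht with rfl | rfl | rfl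
        · exact Or.inr (by simp [hYdef])
        · exact Or.inl (hXY hx)
        · exact Or.inl (hXY hy)
      · simp only [List.prod_cons, List.prod_nil]; group
      · simp only [List.reverse_cons, List.reverse_nil, List.nil_append,
          List.cons_append, List.prod_cons, List.prod_nil]; group
    rw [hbot, Subgroup.mem_bot] at hmem
    apply hxy
    exact (mul_inv_eq_one.mp hmem).symm
  have hKfi : K.FiniteIndex := hji K hKnormal hKne
  haveI := hKfi
  have hfin : Finite (G ⧸ K) := Subgroup.finite_quotient_of_finiteIndex
  -- every element of G is a product of palindromes
  have hall : ∀ g : G, ∃ ps : List G, (∀ p ∈ ps, IsPalindrome Y p) ∧ ps.prod = g := by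
    intro g
    have hg : g ∈ Submonoid.closure (Y ∪ Y⁻¹) := by
      rw [← Subgroup.closure_toSubmonoid, hY]; trivial
    obtain ⟨v, hv, hvp⟩ := Submonoid.exists_list_of_mem_closure hg
    exact ⟨v, fun p hp => ⟨[p], by simpa using hv p hp, by simp, by simp⟩, hvp⟩
  -- choose such a list for each coset representative and bound the lengths
  have : ∀ q : G ⧸ K, ∃ ps : List G, (∀ p ∈ ps, IsPalindrome Y p) ∧ ps.prod = q.out :=
    fun q => hall q.out
  choose rep hrep1 hrep2 using this
  have : Fintype (G ⧸ K) := Fintype.ofFinite _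
  set B : ℕ := Finset.univ.sup fun q : G ⧸ K => (rep q).length with hB
  refine ⟨B + 1, fun g => ?_⟩
  set q : G ⧸ K := QuotientGroup.mk g with hq
  have hmemK : q.out⁻¹ * g ∈ K := by
    rw [← QuotientGroup.eq]
    simp [hq, Quotient.out_eq]
  obtain ⟨l, hl1, hl2, hl3⟩ := revDefect_palindrome Y hmemK
  refine ⟨rep q ++ [q.out⁻¹ * g], ?_, ?_, ?_⟩
  · simp only [List.length_append, List.length_singleton]
    have : (rep q).length ≤ B := by
      rw [hB]
      exact Finset.le_sup (f := fun q : G ⧸ K => (rep q).length) (Finset.mem_univ q)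
    omega
  · intro p hp
    rcases List.mem_append.1 hp with h | h
    · exact hrep1 q p h
    · simp only [List.mem_singleton] at h
      exact h ▸ ⟨l, hl1, hl2, hl3⟩
  · simp [hrep2 q]
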